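/- Let S be a blocking semioval with exactly 25 points in PG(2,11) having a 10-secant line ℓ, and let Q and R be the two points of ℓ not in S. Then for every point P of S not on ℓ, the unique tangent line to S at P passes through Q or through R. -/

import Mathlib

instance : Fact (Nat.Prime 11) := ⟨by norm_num⟩

/-- The points of `PG(2,11)`: the projectivization of `(ZMod 11)^3`. -/
abbrev PGPoint : Type := Projectivization (ZMod 11) (Fin 3 → ZMod 11)

/-- The lines of `PG(2,11)`: the 2-dimensional subspaces of `(ZMod 11)^3`. -/
abbrev PGLine : Type :=
  {W : Submodule (ZMod 11) (Fin 3 → ZMod 11) // Module.finrank (ZMod 11) W = 2}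

/-- Incidence: a point lies on a line when its representing 1-dimensional
subspace is contained in the line's 2-dimensional subspace. -/
def PGmem (P : PGPoint) (L : PGLine) : Prop := Projectivization.submodule P ≤ L.val

/-- The set of points lying on a line. -/
def linePts (L : PGLine) : Set PGPoint := {P | PGmem P L}

/-- The set of points of `S` lying on the line `L`. -/
def secantPts (S : Set PGPoint) (L : PGLine) : Set PGPoint := {P ∈ S | PGmem P L}

/-- A line is a `k`-secant to `S` if it meets `S` in exactly `k` points. -/
def IsSecant (S : Set PGPoint) (k : ℕ) (L : PGLine) : Prop := (secantPts S L).ncard = k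

/-- A tangent line to `S` is a 1-secant. -/
def IsTangent (S : Set PGPoint) (L : PGLine) : Prop := IsSecant S 1 L

/-- A blocking set: every line meets `S`, but `S` contains no line. -/
def IsBlockingSet (S : Set PGPoint) : Prop :=
  (∀ L : PGLine, (secantPts S L).Nonempty) ∧ ∀ L : PGLine, ¬ linePts L ⊆ S

/-- A semioval: every point of `S` lies on exactly one tangent line to `S`. -/
def IsSemioval (S : Set PGPoint) : Prop :=
  ∀ P ∈ S, ∃! L : PGLine, PGmem P L ∧ IsTangent S L

/-- A blocking semioval is both a blocking set and a semioval. -/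
def IsBlockingSemioval (S : Set PGPoint) : Prop := IsBlockingSet S ∧ IsSemioval S


open scoped LinearAlgebra.Projectivization

instance : Finite PGPoint := Quotient.finite _

section Aux

variable {K W W' : Type*} [Field K] [AddCommGroup W] [Module K W] [AddCommGroup W'] [Module K W']

/-- A linear equivalence induces an equivalence of projectivizations. -/
def projEquivOfLinearEquiv (e : W ≃ₗ[K] W') : ℙ K W ≃ ℙ K W' where
  toFun := Projectivization.map (e : W →ₗ[K] W') e.injective
  invFun := Projectivization.map (e.symm : W' →ₗ[K] W) e.symm.injective
  left_inv p := by
    induction' p using Projectivization.ind with v hv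
    simp [Projectivization.map_mk]
  right_inv p := by
    induction' p using Projectivization.ind with v hv
    simp [Projectivization.map_mk]

lemma card_proj_two [FiniteDimensional K W] (h : Module.finrank K W = 2) [DecidableEq K]
    [Finite K] : Nat.card (ℙ K W) = Nat.card K + 1 := by
  have e : W ≃ₗ[K] (Fin 2 → K) := LinearEquiv.ofFinrankEq _ _ (by simp [h])
  have : Fintype K := Fintype.ofFinite K
  rw [Nat.card_congr (projEquivOfLinearEquiv e),
    Nat.card_congr (OnePoint.equivProjectivization K).symm]
  rw [Nat.card_eq_fintype_card, Nat.card_eq_fintype_card]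
  simp [OnePoint]
  convert Fintype.card_option (α := K)
  exact Fintype.card_congr (Equiv.refl _)

end Aux

/-- The points of a line `L` are in bijection with the projectivization of `L`. -/
noncomputable def lineEquiv (L : PGLine) : ℙ (ZMod 11) L.val ≃ linePts L := by
  apply Equiv.ofBijective
    (fun p => ⟨Projectivization.map L.val.subtype L.val.injective_subtype p, by
      induction' p using Projectivization.ind with v hv
      simp only [Projectivization.map_mk]
      change PGmem _ _
      unfold PGmem
      rw [Projectivization.submodule_mk]
      rw [Submodule.span_le]
      simpa using v.2⟩)
  constructor
  · intro a b hab
    exact Projectivization.map_injective L.val.subtype L.val.injective_subtype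
      (congrArg Subtype.val hab)
  · rintro ⟨P, hP⟩
    induction' P using Projectivization.ind with v hv
    have hv' : v ∈ L.val := by
      have := hP
      simp only [linePts, PGmem, Set.mem_setOf_eq, Projectivization.submodule_mk,
        Submodule.span_le] at this
      simpa using this
    refine ⟨Projectivization.mk _ (⟨v, hv'⟩ : L.val) (by simpa using hv), ?_⟩
    ext1
    simp [Projectivization.map_mk]

/-- Every line of `PG(2,11)` has exactly 12 points. -/
lemma card_linePts (L : PGLine) : (linePts L).ncard = 12 := by
  rw [← Nat.card_coe_set_eq, Nat.card_congr (lineEquiv L).symm, card_proj_two L.2]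
  rw [Nat.card_eq_fintype_card]
  simp

/-- Any two lines of `PG(2,11)` meet. -/
lemma exists_inter (t ℓ : PGLine) : ∃ X : PGPoint, PGmem X t ∧ PGmem X ℓ := by
  have h1 : t.val ⊓ ℓ.val ≠ ⊥ := by
    intro h
    have h2 := Submodule.finrank_sup_add_finrank_inf_eq t.val ℓ.val
    rw [h, finrank_bot, t.2, ℓ.2] at h2
    have h3 : Module.finrank (ZMod 11) ↥(t.val ⊔ ℓ.val) ≤ 3 := by
      have h4 := Submodule.finrank_le (t.val ⊔ ℓ.val)
      have h5 : Module.finrank (ZMod 11) (Fin 3 → ZMod 11) = 3 := by simp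
      omega
    omega
  obtain ⟨v, hv, hv0⟩ := Submodule.exists_mem_ne_zero_of_ne_bot h1
  refine ⟨Projectivization.mk _ v hv0, ?_, ?_⟩ <;>
  · unfold PGmem
    rw [Projectivization.submodule_mk, Submodule.span_le, Set.singleton_subset_iff]
    first
    | exact hv.1
    | exact hv.2

theorem tangent_through_Q_or_R (S : Set PGPoint) (hS : IsBlockingSemioval S) (hcard : S.ncard = 25)
    (ℓ : PGLine) (hℓ : IsSecant S 10 ℓ)
    (Q R : PGPoint) (hQR : Q ≠ R)
    (hQℓ : PGmem Q ℓ) (hRℓ : PGmem R ℓ) (hQS : Q ∉ S) (hRS : R ∉ S)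
    (P : PGPoint) (hP : P ∈ S) (hPℓ : ¬ PGmem P ℓ)
    (t : PGLine) (hPt : PGmem P t) (ht : IsTangent S t) :
    PGmem Q t ∨ PGmem R t := by
  obtain ⟨X, hXt, hXℓ⟩ := exists_inter t ℓ
  have hXS : X ∉ S := by
    intro hXS
    obtain ⟨a, ha⟩ := Set.ncard_eq_one.mp ht
    have hPa : P = a := by
      have h1 : P ∈ secantPts S t := ⟨hP, hPt⟩
      rw [ha] at h1; exact h1
    have hXa : X = a := by
      have h1 : X ∈ secantPts S t := ⟨hXS, hXt⟩
      rw [ha] at h1; exact h1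
    exact hPℓ ((hPa.trans hXa.symm) ▸ hXℓ)
  have hd : (linePts ℓ \ S).ncard = 2 := by
    have hsec : linePts ℓ ∩ S = secantPts S ℓ := by
      ext Y; exact ⟨fun ⟨h1, h2⟩ => ⟨h2, h1⟩, fun ⟨h1, h2⟩ => ⟨h2, h1⟩⟩
    have h1 := Set.ncard_inter_add_ncard_diff_eq_ncard (linePts ℓ) S (Set.toFinite _)
    rw [hsec, hℓ, card_linePts] at h1
    omega
  have hQR2 : ({Q, R} : Set PGPoint) = linePts ℓ \ S := by
    apply Set.eq_of_subset_of_ncard_le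
    · rintro Y (rfl | rfl)
      · exact ⟨hQℓ, hQS⟩
      · exact ⟨hRℓ, hRS⟩
    · rw [hd, Set.ncard_pair hQR]
    · exact Set.toFinite _
  have hX : X ∈ ({Q, R} : Set PGPoint) := by rw [hQR2]; exact ⟨hXℓ, hXS⟩
  rcases hX with rfl | rfl
  · exact Or.inl hXt
  · exact Or.inr hXt
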